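/- Let θ > 0 and β > 0, and let λ be exponentially distributed with intensity θ (density θ e^{−θ x} on (0, ∞)). Then for every t ∈ (0,1): (i) the exponential Kies mixture has complementary CDF ∫_0^∞ θ e^{−θ x} exp(−x (t/(1−t))^β) dx = θ (1−t)^β / (θ (1−t)^β + t^β), so that F(t) = t^β / (θ (1−t)^β + t^β); and (ii) F is differentiable at t with F′(t) = θ β t^{β−1} (1−t)^{β−1} / (θ (1−t)^β + t^β)². -/

import Mathlib

open MeasureTheory

lemma kies_exp_int (b : ℝ) (hb : 0 < b) :
    ∫ x in Set.Ioi (0:ℝ), Real.exp (-(b*x)) = 1/b := by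
  have := MeasureTheory.integral_comp_mul_left_Ioi (fun y => Real.exp (-y)) 0 hb
  simp only [mul_zero, integral_exp_neg_Ioi, neg_zero, Real.exp_zero, smul_eq_mul,
    mul_one] at this
  rw [this]; simp [one_div]

lemma kies_key (θ β : ℝ) (hθ : 0 < θ) (hβ : 0 < β) (s : ℝ) (hs : s ∈ Set.Ioo (0:ℝ) 1) :
    (∫ x in Set.Ioi (0:ℝ), θ * Real.exp (-θ * x) * Real.exp (-x * (s / (1 - s)) ^ β))
        = θ * (1 - s) ^ β / (θ * (1 - s) ^ β + s ^ β) ∧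
    (∫ x in Set.Ioi (0:ℝ), θ * Real.exp (-θ * x) * (1 - Real.exp (-x * (s / (1 - s)) ^ β)))
        = s ^ β / (θ * (1 - s) ^ β + s ^ β) := by
  obtain ⟨hs0, hs1⟩ := hs
  have h1s : 0 < 1 - s := by linarith
  set c := (s / (1 - s)) ^ β with hc_def
  have hc : 0 < c := Real.rpow_pos_of_pos (div_pos hs0 h1s) β
  have hrw : ∀ x : ℝ, θ * Real.exp (-θ * x) * Real.exp (-x * c)
      = θ * Real.exp (-((θ + c) * x)) := by
    intro x; rw [mul_assoc, ← Real.exp_add]; ring_nf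
  have hDs : (0:ℝ) < (1 - s) ^ β := Real.rpow_pos_of_pos h1s β
  have hSs : (0:ℝ) < s ^ β := Real.rpow_pos_of_pos hs0 β
  have hcval : c = s ^ β / (1 - s) ^ β := Real.div_rpow hs0.le h1s.le β
  have hint : (∫ x in Set.Ioi (0:ℝ), θ * Real.exp (-θ * x) * Real.exp (-x * c))
      = θ * (1 - s) ^ β / (θ * (1 - s) ^ β + s ^ β) := by
    simp_rw [hrw]
    rw [MeasureTheory.integral_const_mul, kies_exp_int _ (by linarith)]
    rw [hcval]
    field_simp
  refine ⟨hint, ?_⟩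
  have hi1 : IntegrableOn (fun x => θ * Real.exp (-θ * x)) (Set.Ioi (0:ℝ)) :=
    (exp_neg_integrableOn_Ioi 0 hθ).const_mul θ
  have hi2 : IntegrableOn (fun x => θ * Real.exp (-θ * x) * Real.exp (-x * c))
      (Set.Ioi (0:ℝ)) := by
    simp_rw [hrw, ← neg_mul]
    exact (exp_neg_integrableOn_Ioi 0 (by linarith : 0 < θ + c)).const_mul θ
  have hsplit : ∀ x : ℝ, θ * Real.exp (-θ * x) * (1 - Real.exp (-x * c))
      = θ * Real.exp (-θ * x) - θ * Real.exp (-θ * x) * Real.exp (-x * c) := by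
    intro x; ring
  simp_rw [hsplit]
  rw [MeasureTheory.integral_sub hi1 hi2, hint]
  have h1 : (∫ x in Set.Ioi (0:ℝ), θ * Real.exp (-θ * x)) = 1 := by
    simp_rw [neg_mul]
    rw [MeasureTheory.integral_const_mul, kies_exp_int θ hθ]
    field_simp
  rw [h1]
  field_simp
  ring

theorem exponential_kies_mixture
    (θ β : ℝ) (hθ : 0 < θ) (hβ : 0 < β) (F : ℝ → ℝ)
    (hF : ∀ t, F t = ∫ x in Set.Ioi (0 : ℝ),
        θ * Real.exp (-θ * x) * (1 - Real.exp (-x * (t / (1 - t)) ^ β)))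
    (t : ℝ) (ht : t ∈ Set.Ioo (0 : ℝ) 1) :
    (∫ x in Set.Ioi (0 : ℝ), θ * Real.exp (-θ * x) * Real.exp (-x * (t / (1 - t)) ^ β))
        = θ * (1 - t) ^ β / (θ * (1 - t) ^ β + t ^ β) ∧
    F t = t ^ β / (θ * (1 - t) ^ β + t ^ β) ∧
    HasDerivAt F
      (θ * β * t ^ (β - 1) * (1 - t) ^ (β - 1) / (θ * (1 - t) ^ β + t ^ β) ^ 2) t := by
  obtain ⟨ht0, ht1⟩ := ht
  have h1t : 0 < 1 - t := by linarith
  obtain ⟨key1, key2⟩ := kies_key θ β hθ hβ t ⟨ht0, ht1⟩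
  refine ⟨key1, by rw [hF]; exact key2, ?_⟩
  set G : ℝ → ℝ := fun s => s ^ β / (θ * (1 - s) ^ β + s ^ β) with hG_def
  have hFG : Set.EqOn F G (Set.Ioo 0 1) := by
    intro s hs
    rw [hF]
    exact (kies_key θ β hθ hβ s hs).2
  have hDpos : (0:ℝ) < θ * (1 - t) ^ β + t ^ β := by
    have := Real.rpow_pos_of_pos h1t β
    have := Real.rpow_pos_of_pos ht0 β
    positivity
  have hN : HasDerivAt (fun s : ℝ => s ^ β) (β * t ^ (β - 1)) t :=
    Real.hasDerivAt_rpow_const (Or.inl ht0.ne')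
  have hden : HasDerivAt (fun s : ℝ => θ * (1 - s) ^ β + s ^ β)
      (θ * (-1 * β * (1 - t) ^ (β - 1)) + β * t ^ (β - 1)) t := by
    have h2 : HasDerivAt (fun s : ℝ => (1 - s) ^ β) (-1 * β * (1 - t) ^ (β - 1)) t := by
      have h3 := ((hasDerivAt_const t (1:ℝ)).sub (hasDerivAt_id t)).rpow_const
        (p := β) (Or.inl (by simpa using h1t.ne'))
      convert h3 using 1
      norm_num
      show -1 * β * (1 - t) ^ (β - 1) = (0 - 1) * β * (1 - t) ^ (β - 1)
      norm_num
    exact (h2.const_mul θ).add hN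
  have hG : HasDerivAt G ((β * t ^ (β - 1) * (θ * (1 - t) ^ β + t ^ β)
      - t ^ β * (θ * (-1 * β * (1 - t) ^ (β - 1)) + β * t ^ (β - 1)))
      / (θ * (1 - t) ^ β + t ^ β) ^ 2) t := hN.div hden hDpos.ne'
  have e1 : t ^ β = t ^ (β - 1) * t := by
    rw [show β = (β - 1) + 1 by ring, Real.rpow_add_one ht0.ne']
    ring_nf
  have e2 : (1 - t) ^ β = (1 - t) ^ (β - 1) * (1 - t) := by
    rw [show β = (β - 1) + 1 by ring, Real.rpow_add_one h1t.ne']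
    ring_nf
  have := hG.congr_of_eventuallyEq
    (Filter.eventuallyEq_of_mem (isOpen_Ioo.mem_nhds ⟨ht0, ht1⟩) hFG)
  refine this.congr_deriv ?_
  rw [e1, e2]
  ring
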